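/- If Q : Δ(S) × A → ℝ is convex in the belief, then for every belief b ∈ Δ(S) and every a ∈ A: H_POMDP Q(b,a) ≤ H_OTIB Q(b,a). -/

import Mathlib

open Finset
open scoped Classical

set_option linter.unusedSectionVars false

/-- A belief (probability distribution) over a finite state space `S`. -/
structure Belief (S : Type*) [Fintype S] where
  val : S → ℝ
  nonneg : ∀ s, 0 ≤ val s
  sum_one : ∑ s, val s = 1

/-- The convex combination `l • b₁ + (1-l) • b₂` of two beliefs. -/
noncomputable def Belief.mix {S : Type*} [Fintype S] (b₁ b₂ : Belief S) (l : ℝ)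
    (h0 : 0 ≤ l) (h1 : l ≤ 1) : Belief S where
  val s := l * b₁.val s + (1 - l) * b₂.val s
  nonneg s := add_nonneg (mul_nonneg h0 (b₁.nonneg s))
    (mul_nonneg (by linarith) (b₂.nonneg s))
  sum_one := by
    rw [Finset.sum_add_distrib, ← Finset.mul_sum, ← Finset.mul_sum, b₁.sum_one, b₂.sum_one]
    ring

/-- `Q : Δ(S) × A → ℝ` is convex in the belief. -/
def ConvexInBelief {S A : Type*} [Fintype S] (Q : Belief S → A → ℝ) : Prop :=
  ∀ (a : A) (b₁ b₂ : Belief S) (l : ℝ) (h0 : 0 ≤ l) (h1 : l ≤ 1),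
    Q (Belief.mix b₁ b₂ l h0 h1) a ≤ l * Q b₁ a + (1 - l) * Q b₂ a

/-- A finite POMDP: transition function `T s a s' = T(s'|s,a)`, observation function
`Z a s' o = Ω(o|a,s')`, rewards `R`, discount `γ ∈ (0,1)`. -/
structure POMDP (S A O : Type*) [Fintype S] [Fintype A] [Fintype O] where
  T : S → A → S → ℝ
  T_nonneg : ∀ s a s', 0 ≤ T s a s'
  T_sum_one : ∀ s a, ∑ s', T s a s' = 1
  Z : A → S → O → ℝ
  Z_nonneg : ∀ a s' o, 0 ≤ Z a s' o
  Z_sum_one : ∀ a s', ∑ o, Z a s' o = 1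
  R : S → A → ℝ
  γ : ℝ
  γ_pos : 0 < γ
  γ_lt_one : γ < 1

namespace POMDP

variable {S A O : Type*} [Fintype S] [Fintype A] [Fintype O] [Nonempty S] [Nonempty A]
  [Nonempty O]
variable (M : POMDP S A O)

/-- `Pr(s',o|s,a)` -/
def prSO (s : S) (a : A) (s' : S) (o : O) : ℝ := M.Z a s' o * M.T s a s'

lemma prSO_nonneg (s : S) (a : A) (s' : S) (o : O) : 0 ≤ M.prSO s a s' o :=
  mul_nonneg (M.Z_nonneg a s' o) (M.T_nonneg s a s')

/-- `Pr(o|s,a)` -/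
def prO (s : S) (a : A) (o : O) : ℝ := ∑ s', M.prSO s a s' o

/-- `Pr(s',o|b,a)` -/
def bprSO (b : Belief S) (a : A) (s' : S) (o : O) : ℝ := ∑ s, b.val s * M.prSO s a s' o

lemma bprSO_nonneg (b : Belief S) (a : A) (s' : S) (o : O) : 0 ≤ M.bprSO b a s' o :=
  Finset.sum_nonneg fun s _ => mul_nonneg (b.nonneg s) (M.prSO_nonneg s a s' o)

/-- `Pr(o|b,a)` -/
def bprO (b : Belief S) (a : A) (o : O) : ℝ := ∑ s', M.bprSO b a s' o

/-- The unit belief `δ_s`. -/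
noncomputable def unit (s : S) : Belief S where
  val s' := if s' = s then 1 else 0
  nonneg s' := by by_cases h : s' = s <;> simp [h]
  sum_one := by simp

/-- The posterior belief `b_{b,a,o}`, defined when `Pr(o|b,a) > 0`. -/
noncomputable def post (b : Belief S) (a : A) (o : O) (h : 0 < M.bprO b a o) : Belief S where
  val s' := M.bprSO b a s' o / M.bprO b a o
  nonneg s' := div_nonneg (M.bprSO_nonneg b a s' o) h.le
  sum_one := by
    rw [← Finset.sum_div]
    exact div_self (ne_of_gt h)

/-- The one-step belief `b_{s,a,o} = b_{δ_s,a,o}`, defined when `Pr(o|s,a) > 0`. -/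
noncomputable def osb (s : S) (a : A) (o : O) (h : 0 < M.prO s a o) : Belief S where
  val s' := M.prSO s a s' o / M.prO s a o
  nonneg s' := div_nonneg (M.prSO_nonneg s a s' o) h.le
  sum_one := by
    unfold prO
    rw [← Finset.sum_div]
    exact div_self (ne_of_gt h)

/-- Expected reward `R(b,a)`. -/
noncomputable def expR (b : Belief S) (a : A) : ℝ := ∑ s, b.val s * M.R s a

/-- The fast informed bound operator `H_FIB`. -/
noncomputable def HFIB (Q : Belief S → A → ℝ) (b : Belief S) (a : A) : ℝ :=
  M.expR b a + M.γ * ∑ o, Finset.univ.sup' Finset.univ_nonempty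
    (fun a' => ∑ s', M.bprSO b a s' o * Q (unit s') a')

/-- The tighter informed bound operator `H_TIB`. -/
noncomputable def HTIB (Q : Belief S → A → ℝ) (b : Belief S) (a : A) : ℝ :=
  M.expR b a + M.γ * ∑ o, Finset.univ.sup' Finset.univ_nonempty
    (fun a' => ∑ s, if h : 0 < M.prO s a o then
      b.val s * M.prO s a o * Q (M.osb s a o h) a' else 0)

/-- The optimal Bellman operator `H_POMDP`. -/
noncomputable def HPOMDP (Q : Belief S → A → ℝ) (b : Belief S) (a : A) : ℝ :=
  M.expR b a + M.γ * ∑ o, if h : 0 < M.bprO b a o then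
    M.bprO b a o * Finset.univ.sup' Finset.univ_nonempty (fun a' => Q (M.post b a o h) a')
  else 0

/-- Index type for the family `B_SAO`: `none` indexes the initial belief `b₀`,
`some (s,a,o)` (with `Pr(o|s,a) > 0`) indexes the one-step belief `b_{s,a,o}`. -/
abbrev OSIdx : Type _ := Option {x : S × A × O // 0 < M.prO x.1 x.2.1 x.2.2}

/-- The member of the family `B_SAO` (with initial belief `b₀`) at a given index. -/
noncomputable def member (b₀ : Belief S) : M.OSIdx → Belief S
  | none => b₀
  | some x => M.osb x.1.1 x.1.2.1 x.1.2.2 x.2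

/-- `w` is a weight function for the belief `tgt` over the family `B_SAO`. -/
def IsWeight (b₀ : Belief S) (tgt : Belief S) (w : M.OSIdx → ℝ) : Prop :=
  (∀ i, 0 ≤ w i) ∧ ∀ s, ∑ i, w i * (M.member b₀ i).val s = tgt.val s

/-- The optimized tighter informed bound operator `H_OTIB`. -/
noncomputable def HOTIB (b₀ : Belief S) (Q : Belief S → A → ℝ) (b : Belief S) (a : A) : ℝ :=
  M.expR b a + M.γ * ∑ o, if h : 0 < M.bprO b a o then
    Finset.univ.sup' Finset.univ_nonempty (fun a' =>
      M.bprO b a o * ⨅ w : {w : M.OSIdx → ℝ // M.IsWeight b₀ (M.post b a o h) w},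
        ∑ i, (w : M.OSIdx → ℝ) i * Q (M.member b₀ i) a')
  else 0

/-- The operator `H_ŵ` induced by a weight selection `W`. -/
noncomputable def Hsel (b₀ : Belief S)
    (W : ∀ (b : Belief S) (a : A) (o : O), 0 < M.bprO b a o → (M.OSIdx → ℝ))
    (Q : Belief S → A → ℝ) (b : Belief S) (a : A) : ℝ :=
  M.expR b a + M.γ * ∑ o, if h : 0 < M.bprO b a o then
    Finset.univ.sup' Finset.univ_nonempty (fun a' =>
      M.bprO b a o * ∑ i, W b a o h i * Q (M.member b₀ i) a')
  else 0

end POMDP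

theorem Belief.ext' {S : Type*} [Fintype S] {b₁ b₂ : Belief S}
    (h : ∀ s, b₁.val s = b₂.val s) : b₁ = b₂ := by
  cases b₁; cases b₂
  have : _ = _ := funext h
  simp_all

/-- Jensen's inequality for `Q` convex in the belief. -/
theorem jensen {S A ι : Type*} [Fintype S] (Q : Belief S → A → ℝ) (hQ : ConvexInBelief Q)
    (a : A) (t : Finset ι) (w : ι → ℝ) (B : ι → Belief S)
    (hw : ∀ i ∈ t, 0 ≤ w i) (hsum : ∑ i ∈ t, w i = 1) (tgt : Belief S)
    (htgt : ∀ s, ∑ i ∈ t, w i * (B i).val s = tgt.val s) :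
    Q tgt a ≤ ∑ i ∈ t, w i * Q (B i) a := by
  classical
  induction t using Finset.induction_on generalizing w tgt with
  | empty => simp at hsum
  | @insert i t hi ih =>
    rw [Finset.sum_insert hi] at hsum ⊢
    have hr0 : 0 ≤ ∑ j ∈ t, w j :=
      Finset.sum_nonneg fun j hj => hw j (Finset.mem_insert_of_mem hj)
    have h0 : 0 ≤ w i := hw i (Finset.mem_insert_self i t)
    by_cases hr : ∑ j ∈ t, w j = 0
    · have hz : ∀ j ∈ t, w j = 0 :=
        (Finset.sum_eq_zero_iff_of_nonneg
          fun j hj => hw j (Finset.mem_insert_of_mem hj)).mp hr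
      have hl : w i = 1 := by rw [hr] at hsum; linarith
      have htgt' : tgt = B i := by
        refine (Belief.ext' fun s => ?_).symm
        have := htgt s
        rw [Finset.sum_insert hi, Finset.sum_eq_zero
          (fun j hj => by rw [hz j hj, zero_mul]), hl] at this
        linarith
      rw [htgt', hl, Finset.sum_eq_zero (fun j hj => by rw [hz j hj, zero_mul])]
      simp
    · have hrpos : 0 < ∑ j ∈ t, w j := lt_of_le_of_ne hr0 (Ne.symm hr)
      have h1 : w i ≤ 1 := by nlinarith
      set r := ∑ j ∈ t, w j with hrdef
      have hb2val : ∀ s, 0 ≤ (∑ j ∈ t, w j * (B j).val s) / r :=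
        fun s => div_nonneg (Finset.sum_nonneg fun j hj =>
          mul_nonneg (hw j (Finset.mem_insert_of_mem hj)) ((B j).nonneg s)) hrpos.le
      have hb2sum : ∑ s, (∑ j ∈ t, w j * (B j).val s) / r = 1 := by
        rw [← Finset.sum_div, Finset.sum_comm]
        have : ∀ j ∈ t, ∑ s, w j * (B j).val s = w j := by
          intro j hj
          rw [← Finset.mul_sum, (B j).sum_one, mul_one]
        rw [Finset.sum_congr rfl this]
        exact div_self hr
      set b₂ : Belief S := ⟨fun s => (∑ j ∈ t, w j * (B j).val s) / r, hb2val, hb2sum⟩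
        with hb2def
      have htgt2 : tgt = Belief.mix (B i) b₂ (w i) h0 h1 := by
        refine Belief.ext' fun s => ?_
        have := htgt s
        rw [Finset.sum_insert hi] at this
        simp only [Belief.mix, hb2def]
        have h1r : 1 - w i = r := by linarith
        rw [h1r, mul_div_cancel₀ _ hr]
        linarith
      have hih := ih (fun j => w j / r)
        (fun j hj => div_nonneg (hw j (Finset.mem_insert_of_mem hj)) hrpos.le)
        (by rw [← Finset.sum_div]; exact div_self hr) b₂
        (fun s => by rw [hb2def]; simp only [← Finset.sum_div, div_mul_eq_mul_div])
      have hmix := hQ a (B i) b₂ (w i) h0 h1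
      rw [htgt2]
      have h1r : 1 - w i = r := by linarith
      calc Q (Belief.mix (B i) b₂ (w i) h0 h1) a
          ≤ w i * Q (B i) a + (1 - w i) * Q b₂ a := hmix
        _ ≤ w i * Q (B i) a + r * ∑ j ∈ t, (w j / r) * Q (B j) a := by
            rw [h1r]
            exact add_le_add (le_refl _) (mul_le_mul_of_nonneg_left hih hrpos.le)
        _ = w i * Q (B i) a + ∑ j ∈ t, w j * Q (B j) a := by
            rw [Finset.mul_sum]
            congr 1
            refine Finset.sum_congr rfl fun j hj => ?_
            field_simp

namespace POMDP

variable {S A O : Type*} [Fintype S] [Fintype A] [Fintype O] [Nonempty S] [Nonempty A]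
  [Nonempty O]
variable (M : POMDP S A O)

lemma prO_nonneg (s : S) (a : A) (o : O) : 0 ≤ M.prO s a o :=
  Finset.sum_nonneg fun s' _ => M.prSO_nonneg s a s' o

lemma prSO_eq_zero {s : S} {a : A} {o : O} (h : M.prO s a o = 0) (s' : S) :
    M.prSO s a s' o = 0 := by
  have := (Finset.sum_eq_zero_iff_of_nonneg
    (fun s'' _ => M.prSO_nonneg s a s'' o)).mp h
  exact this s' (Finset.mem_univ s')

lemma bprO_nonneg (b : Belief S) (a : A) (o : O) : 0 ≤ M.bprO b a o :=
  Finset.sum_nonneg fun s' _ => M.bprSO_nonneg b a s' o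

/-- The canonical weight function witnesses nonemptiness of `W_{b,a,o}`. -/
lemma exists_isWeight (b₀ b : Belief S) (a : A) (o : O) (h : 0 < M.bprO b a o) :
    ∃ w : M.OSIdx → ℝ, M.IsWeight b₀ (M.post b a o h) w := by
  classical
  refine ⟨fun i => Option.elim i 0 (fun x => if x.1.2.1 = a ∧ x.1.2.2 = o then
        b.val x.1.1 * M.prO x.1.1 a o / M.bprO b a o else 0), ?_, ?_⟩
  · rintro (_ | x)
    · exact le_refl 0
    · simp only [Option.elim]
      split
      · exact div_nonneg (mul_nonneg (b.nonneg _) (M.prO_nonneg _ _ _)) h.le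
      · exact le_refl 0
  · intro s'
    rw [Fintype.sum_option]
    simp only [Option.elim, zero_mul, zero_add]
    have hterm : ∀ x : {x : S × A × O // 0 < M.prO x.1 x.2.1 x.2.2},
        (if x.1.2.1 = a ∧ x.1.2.2 = o then
          b.val x.1.1 * M.prO x.1.1 a o / M.bprO b a o else 0)
          * (M.member b₀ (some x)).val s'
        = (fun y : S × A × O => if y.2.1 = a ∧ y.2.2 = o then
            b.val y.1 * M.prSO y.1 a s' o / M.bprO b a o else 0) x.1 := by
      rintro ⟨⟨s₁, a₁, o₁⟩, hx⟩
      simp only [member, osb]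
      by_cases hc : a₁ = a ∧ o₁ = o
      · rw [if_pos hc, if_pos hc, hc.1, hc.2]
        rw [hc.1, hc.2] at hx
        field_simp
      · simp [hc]
    rw [Finset.sum_congr rfl fun x _ => hterm x]
    rw [← Finset.sum_subtype (Finset.univ.filter fun x : S × A × O => 0 < M.prO x.1 x.2.1 x.2.2)
      (by simp) (fun y : S × A × O => if y.2.1 = a ∧ y.2.2 = o then
        b.val y.1 * M.prSO y.1 a s' o / M.bprO b a o else 0)]
    rw [Finset.sum_filter]
    have : ∀ y : S × A × O,
        (if 0 < M.prO y.1 y.2.1 y.2.2 then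
          (if y.2.1 = a ∧ y.2.2 = o then b.val y.1 * M.prSO y.1 a s' o / M.bprO b a o else 0)
        else 0)
        = if y.2.1 = a ∧ y.2.2 = o then
            b.val y.1 * M.prSO y.1 a s' o / M.bprO b a o else 0 := by
      rintro ⟨s₁, a₁, o₁⟩
      by_cases hp : 0 < M.prO s₁ a₁ o₁
      · rw [if_pos hp]
      · rw [if_neg hp]
        by_cases hc : a₁ = a ∧ o₁ = o
        · have hz : M.prO s₁ a o = 0 := by
            rw [← hc.1, ← hc.2]
            exact le_antisymm (not_lt.mp hp) (M.prO_nonneg _ _ _)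
          rw [if_pos hc, M.prSO_eq_zero hz, mul_zero, zero_div]
        · rw [if_neg hc]
    rw [Finset.sum_congr rfl fun y _ => this y]
    rw [Fintype.sum_prod_type]
    have hinner : ∀ s₁ : S,
        (∑ x : A × O, if x.1 = a ∧ x.2 = o then
          b.val s₁ * M.prSO s₁ a s' o / M.bprO b a o else 0)
        = b.val s₁ * M.prSO s₁ a s' o / M.bprO b a o := by
      intro s₁
      rw [Fintype.sum_prod_type]
      have step1 : ∀ x : A, (∑ y : O, if x = a ∧ y = o then
          b.val s₁ * M.prSO s₁ a s' o / M.bprO b a o else 0)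
          = if x = a then b.val s₁ * M.prSO s₁ a s' o / M.bprO b a o else 0 := by
        intro x
        by_cases hx : x = a
        · simp only [hx, true_and]
          rw [Finset.sum_ite_eq']
          simp
        · simp [hx]
      calc (∑ x : A, ∑ y : O, if x = a ∧ y = o then
            b.val s₁ * M.prSO s₁ a s' o / M.bprO b a o else 0)
          = ∑ x : A, if x = a then b.val s₁ * M.prSO s₁ a s' o / M.bprO b a o else 0 :=
            Finset.sum_congr rfl fun x _ => step1 x
        _ = b.val s₁ * M.prSO s₁ a s' o / M.bprO b a o := by
            rw [Finset.sum_ite_eq']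
            simp
    rw [Finset.sum_congr rfl fun s₁ _ => hinner s₁]
    simp only [post, bprSO, ← Finset.sum_div]

lemma isWeight_sum_one {b₀ tgt : Belief S} {w : M.OSIdx → ℝ}
    (hw : M.IsWeight b₀ tgt w) : ∑ i, w i = 1 := by
  have : ∀ i : M.OSIdx, w i = ∑ s, w i * (M.member b₀ i).val s := by
    intro i
    rw [← Finset.mul_sum, (M.member b₀ i).sum_one, mul_one]
  rw [Finset.sum_congr rfl fun i _ => this i, Finset.sum_comm]
  rw [Finset.sum_congr rfl fun s _ => hw.2 s]
  exact tgt.sum_one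

end POMDP

/-- If `Q` is convex in the belief then `H_POMDP Q ≤ H_OTIB Q` pointwise. -/
theorem HPOMDP_le_HOTIB {S A O : Type*} [Fintype S] [Fintype A] [Fintype O]
    [Nonempty S] [Nonempty A] [Nonempty O] (M : POMDP S A O) (b₀ : Belief S)
    (Q : Belief S → A → ℝ) (hQ : ConvexInBelief Q) (b : Belief S) (a : A) :
    M.HPOMDP Q b a ≤ M.HOTIB b₀ Q b a := by
  unfold POMDP.HPOMDP POMDP.HOTIB
  refine add_le_add (le_refl _) (mul_le_mul_of_nonneg_left (Finset.sum_le_sum fun o _ => ?_)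
    M.γ_pos.le)
  by_cases h : 0 < M.bprO b a o
  · rw [dif_pos h, dif_pos h]
    obtain ⟨a', -, ha'⟩ := Finset.exists_mem_eq_sup' Finset.univ_nonempty
      (fun a' => Q (M.post b a o h) a')
    rw [ha']
    refine le_trans ?_ (Finset.le_sup' _ (Finset.mem_univ a'))
    refine mul_le_mul_of_nonneg_left ?_ (M.bprO_nonneg b a o)
    haveI : Nonempty {w : M.OSIdx → ℝ // M.IsWeight b₀ (M.post b a o h) w} := by
      obtain ⟨w, hw⟩ := M.exists_isWeight b₀ b a o h
      exact ⟨⟨w, hw⟩⟩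
    refine le_ciInf fun w => ?_
    exact jensen Q hQ a' Finset.univ w.1 (M.member b₀)
      (fun i _ => w.2.1 i) (M.isWeight_sum_one w.2) _ (fun s => w.2.2 s)
  · rw [dif_neg h, dif_neg h]
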